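/- arXiv:1407.0302 — 2 statements merged into one kernel-verified Lean document; each statement's English description precedes it below -/
import Mathlib

section
/- Let H be a group acting on a non-empty simple graph Γ, let A be a non-trivial group, and let G = A ≀_Γ H be the graph-wreath product. Then G is finitely generated if and only if both A and H are finitely generated and Γ has finitely many H-orbits of vertices. -/
universe u v

/-- A module `M` over `R` is of type `FP_n` if there is an exact sequence
`F_n → … → F_0 → M → 0` with each `F_i` a finitely generated free `R`-module. -/
def ModuleFP (R : Type u) [Semiring R] (n : ℕ) (M : Type v) [AddCommMonoid M]
    [Module R M] : Prop :=
  ∃ (k : ℕ → ℕ) (d : ∀ i : ℕ, ((Fin (k (i + 1)) → R) →ₗ[R] (Fin (k i) → R)))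
    (f : (Fin (k 0) → R) →ₗ[R] M),
    Function.Surjective f ∧
    (0 < n → LinearMap.ker f = LinearMap.range (d 0)) ∧
    (∀ i : ℕ, i + 2 ≤ n → LinearMap.ker (d i) = LinearMap.range (d (i + 1)))

/-- The trivial module structure of `J` over the group algebra `J[G]`,
via the augmentation homomorphism `J[G] → J`. -/
noncomputable def trivialModuleStruct (J : Type u) [CommRing J] (G : Type v) [Group G] :
    Module (MonoidAlgebra J G) J :=
  Module.compHom J ((MonoidAlgebra.lift J J G) 1).toRingHom

/-- A group `G` is of type `FP_n` over a commutative ring `J` if the trivial module `J`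
is of type `FP_n` over the group algebra `J[G]`. -/
def GroupFPOver (J : Type u) [CommRing J] (G : Type v) [Group G] (n : ℕ) : Prop :=
  @ModuleFP (MonoidAlgebra J G) _ n J _ (trivialModuleStruct J G)

/-- A group `G` is of type `FP_n` if the trivial module `ℤ` is of type `FP_n` over `ℤG`. -/
def GroupFP (G : Type v) [Group G] (n : ℕ) : Prop :=
  GroupFPOver ℤ G n

/-- A group is finitely presented if it is the quotient of a finitely generated free
group by the normal closure of finitely many relators. -/
def GroupFinitelyPresented (G : Type v) [Group G] : Prop :=
  ∃ (k : ℕ) (rels : Set (FreeGroup (Fin k))), rels.Finite ∧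
    Nonempty (PresentedGroup rels ≃* G)

/-- The permutation module `ℤX` of an `H`-set `X` is of type `FP_n` over `ℤH`. -/
def PermModuleFP (H : Type u) [Group H] (X : Type v) [MulAction H X] (n : ℕ) : Prop :=
  ModuleFP (MonoidAlgebra ℤ H) n (Representation.ofMulAction ℤ H X).asModule



section GraphProduct

variable (V : Type u) (A : Type v) [Group A] (Γ : SimpleGraph V)

/-- The commutation relators defining the graph product of copies of `A` over
the simple graph `Γ`: elements over adjacent vertices commute. -/
def GraphProductRels : Set (Monoid.CoprodI fun _ : V => A) :=
  {x | ∃ (u v : V) (a b : A), Γ.Adj u v ∧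
    x = Monoid.CoprodI.of (M := fun _ : V => A) (i := u) a *
        Monoid.CoprodI.of (M := fun _ : V => A) (i := v) b *
        (Monoid.CoprodI.of (M := fun _ : V => A) (i := u) a)⁻¹ *
        (Monoid.CoprodI.of (M := fun _ : V => A) (i := v) b)⁻¹}

/-- The graph product `A^Γ` of copies of the group `A` over the simple graph `Γ`:
the quotient of the free product of copies of `A` indexed by the vertices by the
relations making the copies at adjacent vertices commute elementwise. -/
def GraphProduct :=
  Monoid.CoprodI (fun _ : V => A) ⧸ Subgroup.normalClosure (GraphProductRels V A Γ)

instance : Group (GraphProduct V A Γ) :=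
  inferInstanceAs (Group (_ ⧸ _))

/-- The canonical homomorphism from the vertex group at `v` to the graph product. -/
def GraphProduct.of (v : V) : A →* GraphProduct V A Γ :=
  (QuotientGroup.mk' _).comp (Monoid.CoprodI.of (M := fun _ : V => A) (i := v))

end GraphProduct

section Cliques

variable (V : Type u) (H : Type w) [Group H] (Γ : SimpleGraph V) [MulAction H V]

/-- The `m`-cliques of the graph `Γ` (sets of `m` distinct pairwise adjacent vertices). -/
def Cliques (m : ℕ) := {s : Finset V // Γ.IsNClique m s}

/-- A group acting on the graph `Γ` acts on its `m`-cliques. -/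
noncomputable def cliqueMulAction
    (hadj : ∀ (h : H) (u v : V), Γ.Adj u v → Γ.Adj (h • u) (h • v)) (m : ℕ) :
    MulAction H (Cliques V Γ m) :=
  letI := Classical.decEq V
  {
  smul := fun h s => ⟨s.1.image (h • ·), by
    obtain ⟨hc, hcard⟩ := s.2
    constructor
    · rintro x hx y hy hxy
      simp only [Finset.coe_image, Set.mem_image, Finset.mem_coe] at hx hy
      obtain ⟨a, ha, rfl⟩ := hx
      obtain ⟨b, hb, rfl⟩ := hy
      exact hadj h a b (hc ha hb fun h' => hxy (by rw [h']))
    · rw [Finset.card_image_of_injective _ (MulAction.injective h), hcard]⟩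
  one_smul := fun s => Subtype.ext (by
    show s.1.image ((1 : H) • ·) = s.1
    simp)
  mul_smul := fun g h s => Subtype.ext (by
    show s.1.image ((g * h) • ·) = (s.1.image (h • ·)).image (g • ·)
    rw [Finset.image_image]
    exact Finset.image_congr fun x _ => (mul_smul g h x)) }

end Cliques

section AuxGraphProduct

variable {V : Type u} {A : Type v} [Group A] {Γ : SimpleGraph V}

/-- Lift a family of homomorphisms with commuting adjacent images to the graph product. -/
def GraphProduct.lift {W : Type*} [Group W] (f : ∀ _ : V, A →* W)
    (hf : ∀ u w : V, Γ.Adj u w → ∀ a b : A, Commute (f u a) (f w b)) :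
    GraphProduct V A Γ →* W :=
  QuotientGroup.lift _ (Monoid.CoprodI.lift f)
    (by
      intro x hx
      refine Subgroup.normalClosure_le_normal (N := (Monoid.CoprodI.lift f).ker) ?_ hx
      rintro x ⟨u, w, a, b, hadj, rfl⟩
      have hc := hf u w hadj a b
      simp only [SetLike.mem_coe, MonoidHom.mem_ker, map_mul, map_inv, Monoid.CoprodI.lift_of]
      rw [← commutatorElement_def]
      exact commutatorElement_eq_one_iff_commute.mpr hc)

@[simp]
theorem GraphProduct.lift_of {W : Type*} [Group W] (f : ∀ _ : V, A →* W)
    (hf : ∀ u w : V, Γ.Adj u w → ∀ a b : A, Commute (f u a) (f w b)) (u : V) (a : A) :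
    GraphProduct.lift f hf (GraphProduct.of V A Γ u a) = f u a := by
  show (Monoid.CoprodI.lift f) (Monoid.CoprodI.of a) = f u a
  rw [Monoid.CoprodI.lift_of]

/-- Adjacent vertex groups commute in the graph product. -/
theorem GraphProduct.of_commute {u w : V} (h : Γ.Adj u w) (a b : A) :
    Commute (GraphProduct.of V A Γ u a) (GraphProduct.of V A Γ w b) := by
  rw [← commutatorElement_eq_one_iff_commute]
  have hx : (Monoid.CoprodI.of (M := fun _ : V => A) (i := u) a *
      Monoid.CoprodI.of (M := fun _ : V => A) (i := w) b *
      (Monoid.CoprodI.of (M := fun _ : V => A) (i := u) a)⁻¹ *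
      (Monoid.CoprodI.of (M := fun _ : V => A) (i := w) b)⁻¹) ∈
      Subgroup.normalClosure (GraphProductRels V A Γ) :=
    Subgroup.subset_normalClosure ⟨u, w, a, b, h, rfl⟩
  have h1 := (QuotientGroup.eq_one_iff _).mpr hx
  rw [commutatorElement_def]
  exact h1

open Classical in
/-- The retraction of the graph product onto the vertex group at `v`. -/
noncomputable def GraphProduct.retr (v : V) : GraphProduct V A Γ →* A :=
  GraphProduct.lift (fun u => if u = v then MonoidHom.id A else 1)
    (by
      intro u w hadj a b
      by_cases hu : u = v
      · subst hu
        rw [if_pos rfl, if_neg (fun h => hadj.ne h.symm)]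
        simpa using Commute.one_right a
      · rw [if_neg hu]
        simpa using Commute.one_left _)

open Classical in
theorem GraphProduct.retr_of (v u : V) (a : A) :
    GraphProduct.retr (Γ := Γ) v (GraphProduct.of V A Γ u a) = if u = v then a else 1 := by
  classical
  rw [GraphProduct.retr, GraphProduct.lift_of]
  split <;> rfl

@[simp]
theorem GraphProduct.retr_of_self (v : V) (a : A) :
    GraphProduct.retr (Γ := Γ) v (GraphProduct.of V A Γ v a) = a := by
  rw [GraphProduct.retr_of, if_pos rfl]

open Classical in
/-- The endomorphism of the graph product killing the vertex groups in `O`. -/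
noncomputable def GraphProduct.kill (O : Set V) : GraphProduct V A Γ →* GraphProduct V A Γ :=
  GraphProduct.lift (fun u => if u ∈ O then 1 else GraphProduct.of V A Γ u)
    (by
      intro u w hadj a b
      rcases Classical.em (u ∈ O) with hu | hu
      · rw [if_pos hu]; simpa using Commute.one_left _
      · rcases Classical.em (w ∈ O) with hw | hw
        · rw [if_neg hu, if_pos hw]; simpa using Commute.one_right _
        · rw [if_neg hu, if_neg hw]
          exact GraphProduct.of_commute hadj a b)

open Classical in
theorem GraphProduct.kill_of (O : Set V) (u : V) (a : A) :
    GraphProduct.kill (Γ := Γ) O (GraphProduct.of V A Γ u a) =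
      if u ∈ O then 1 else GraphProduct.of V A Γ u a := by
  rw [GraphProduct.kill, GraphProduct.lift_of]
  split <;> rfl

/-- A subgroup containing all vertex-group images is the whole graph product. -/
theorem GraphProduct.mem_of_forall_of {K : Subgroup (GraphProduct V A Γ)}
    (hK : ∀ (u : V) (a : A), GraphProduct.of V A Γ u a ∈ K) (g : GraphProduct V A Γ) :
    g ∈ K := by
  obtain ⟨w, rfl⟩ := QuotientGroup.mk'_surjective _ g
  induction w using Monoid.CoprodI.induction_on with
  | one => exact K.one_mem
  | of i m => exact hK i m
  | mul x y hx hy => exact K.mul_mem hx hy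

/-- Every element of the graph product lies in the subgroup generated by the images
of finitely many vertex groups evaluated at finitely many elements. -/
theorem GraphProduct.exists_finset (g : GraphProduct V A Γ) :
    ∃ (U : Finset V) (F : Finset A),
      g ∈ Subgroup.closure {x | ∃ u ∈ U, ∃ a ∈ F, x = GraphProduct.of V A Γ u a} := by
  classical
  obtain ⟨w, rfl⟩ := QuotientGroup.mk'_surjective _ g
  induction w using Monoid.CoprodI.induction_on with
  | one => exact ⟨∅, ∅, Subgroup.one_mem _⟩
  | of i m =>
      exact ⟨{i}, {m}, Subgroup.subset_closure ⟨i, Finset.mem_singleton_self i, m,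
        Finset.mem_singleton_self m, rfl⟩⟩
  | mul x y hx hy =>
      obtain ⟨U1, F1, h1⟩ := hx
      obtain ⟨U2, F2, h2⟩ := hy
      refine ⟨U1 ∪ U2, F1 ∪ F2, ?_⟩
      have hs1 : {x | ∃ u ∈ U1, ∃ a ∈ F1, x = GraphProduct.of V A Γ u a} ⊆
          {x | ∃ u ∈ U1 ∪ U2, ∃ a ∈ F1 ∪ F2, x = GraphProduct.of V A Γ u a} := by
        rintro x ⟨u, hu, a, ha, rfl⟩
        exact ⟨u, Finset.mem_union_left _ hu, a, Finset.mem_union_left _ ha, rfl⟩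
      have hs2 : {x | ∃ u ∈ U2, ∃ a ∈ F2, x = GraphProduct.of V A Γ u a} ⊆
          {x | ∃ u ∈ U1 ∪ U2, ∃ a ∈ F1 ∪ F2, x = GraphProduct.of V A Γ u a} := by
        rintro x ⟨u, hu, a, ha, rfl⟩
        exact ⟨u, Finset.mem_union_right _ hu, a, Finset.mem_union_right _ ha, rfl⟩
      exact Subgroup.mul_mem _
        (Subgroup.closure_mono hs1 h1) (Subgroup.closure_mono hs2 h2)

end AuxGraphProduct


section GraphWreath

variable (V : Type u) (H : Type w) (A : Type v) [Group H] [Group A] [MulAction H V]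
  [Nonempty V] (Γ : SimpleGraph V)


lemma graphWreath_aux_closure {W : Type*} [Group W]
    (φ : H →* MulAut (GraphProduct V A Γ)) (θ : GraphProduct V A Γ →* W) (C : Subgroup W)
    (S' : Set (GraphProduct V A Γ)) (h : ∀ y ∈ S', ∀ k : H, θ (φ k y) ∈ C) :
    ∀ g ∈ Subgroup.closure S', ∀ k : H, θ (φ k g) ∈ C := by
  intro g hg
  let D : Subgroup (GraphProduct V A Γ) :=
    { carrier := {g | ∀ k : H, θ (φ k g) ∈ C}
      one_mem' := fun k => by simpa using C.one_mem
      mul_mem' := fun {a b} ha hb k => by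
        rw [map_mul, map_mul]
        exact C.mul_mem (ha k) (hb k)
      inv_mem' := fun {a} ha k => by
        rw [map_inv, map_inv]
        exact C.inv_mem (ha k) }
  exact (Subgroup.closure_le D).mpr h hg

lemma graphWreath_aux_top {W : Type*} [Group W]
    (φ : H →* MulAut (GraphProduct V A Γ)) (θ : GraphProduct V A Γ →* W) (C : Subgroup W)
    (S : Set (GraphProduct V A Γ ⋊[φ] H)) (hgen : Subgroup.closure S = ⊤)
    (hS : ∀ x ∈ S, ∀ k : H, θ (φ k x.left) ∈ C) :
    ∀ (x : GraphProduct V A Γ ⋊[φ] H) (k : H), θ (φ k x.left) ∈ C := by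
  let K : Subgroup (GraphProduct V A Γ ⋊[φ] H) :=
    { carrier := {x | ∀ k : H, θ (φ k x.left) ∈ C}
      one_mem' := fun k => by simpa using C.one_mem
      mul_mem' := fun {a b} ha hb k => by
        have e : (a * b).left = a.left * φ a.right b.left := rfl
        have e2 : φ k (φ a.right b.left) = φ (k * a.right) b.left := by
          rw [map_mul φ, MulAut.mul_apply]
        rw [e, map_mul, e2, map_mul]
        exact C.mul_mem (ha k) (hb (k * a.right))
      inv_mem' := fun {a} ha k => by
        have e : (a⁻¹).left = φ a.right⁻¹ a.left⁻¹ := rfl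
        have e2 : φ k (φ a.right⁻¹ a.left⁻¹) = φ (k * a.right⁻¹) a.left⁻¹ := by
          rw [map_mul φ, MulAut.mul_apply]
        rw [e, e2, map_inv, map_inv]
        exact C.inv_mem (ha (k * a.right⁻¹)) }
  intro x k
  have hle : (⊤ : Subgroup (GraphProduct V A Γ ⋊[φ] H)) ≤ K := by
    rw [← hgen]
    exact (Subgroup.closure_le K).mpr (fun x hx => hS x hx)
  exact hle (Subgroup.mem_top x) k

/-- The graph-wreath product `G = A ≀_Γ H` with `A ≠ 1` is finitely generated iff
`A` and `H` are finitely generated and there are finitely many orbits of vertices. -/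
theorem graphWreath_fg_iff [Nontrivial A]
    (hadj : ∀ (h : H) (u v : V), Γ.Adj u v → Γ.Adj (h • u) (h • v))
    (φ : H →* MulAut (GraphProduct V A Γ))
    (hφ : ∀ (h : H) (v : V) (a : A),
      φ h (GraphProduct.of V A Γ v a) = GraphProduct.of V A Γ (h • v) a) :
    Group.FG (GraphProduct V A Γ ⋊[φ] H) ↔
      (Group.FG A ∧ Group.FG H ∧ Finite (MulAction.orbitRel.Quotient H V)) := by
  constructor
  · intro hfg
    haveI := hfg
    classical
    obtain ⟨S, hSgen, hSfin⟩ := Group.fg_iff.mp hfg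
    have hdec : ∀ x : GraphProduct V A Γ ⋊[φ] H, ∃ (U : Finset V) (F : Finset A),
        x.left ∈ Subgroup.closure {y | ∃ u ∈ U, ∃ a ∈ F, y = GraphProduct.of V A Γ u a} :=
      fun x => GraphProduct.exists_finset x.left
    choose U0 F0 hUF using hdec
    set Sf := hSfin.toFinset with hSf
    set U : Finset V := Sf.sup U0 with hU
    set F : Finset A := Sf.sup F0 with hF
    set Sgp : Set (GraphProduct V A Γ) :=
      {y | ∃ u ∈ U, ∃ a ∈ F, y = GraphProduct.of V A Γ u a} with hSgp
    have hmemS : ∀ x ∈ S, x.left ∈ Subgroup.closure Sgp := by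
      intro x hx
      refine Subgroup.closure_mono ?_ (hUF x)
      rintro y ⟨u, hu, a, ha, rfl⟩
      exact ⟨u, Finset.le_sup (f := U0) (hSfin.mem_toFinset.mpr hx) hu,
        a, Finset.le_sup (f := F0) (hSfin.mem_toFinset.mpr hx) ha, rfl⟩
    have hHfg : Group.FG H :=
      Group.fg_of_surjective (f := (SemidirectProduct.rightHom : GraphProduct V A Γ ⋊[φ] H →* H))
        SemidirectProduct.rightHom_surjective
    -- A is finitely generated
    have v0 : V := Classical.arbitrary V
    set B : Subgroup A := Subgroup.closure (↑F : Set A) with hB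
    have hgenprop : ∀ y ∈ Sgp, ∀ k : H, GraphProduct.retr (Γ := Γ) v0 (φ k y) ∈ B := by
      rintro y ⟨u, hu, a, ha, rfl⟩ k
      rw [hφ, GraphProduct.retr_of]
      split
      · exact Subgroup.subset_closure ha
      · exact B.one_mem
    have hallA := graphWreath_aux_top V H A Γ φ (GraphProduct.retr v0) B S hSgen
      (fun x hx k =>
        graphWreath_aux_closure V H A Γ φ (GraphProduct.retr v0) B Sgp hgenprop
          x.left (hmemS x hx) k)
    have hBtop : B = ⊤ := by
      rw [Subgroup.eq_top_iff']
      intro a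
      have h1 := hallA (SemidirectProduct.inl (GraphProduct.of V A Γ v0 a)) 1
      simpa [SemidirectProduct.left_inl] using h1
    have hAfg : Group.FG A := Group.fg_iff.mpr ⟨↑F, hBtop, F.finite_toSet⟩
    -- finitely many orbits
    set O : Set V := {w | ∃ u ∈ U, ∃ k : H, k • u = w} with hOdef
    have hOprop : ∀ y ∈ Sgp, ∀ k : H,
        GraphProduct.kill (Γ := Γ) O (φ k y) ∈ (⊥ : Subgroup (GraphProduct V A Γ)) := by
      rintro y ⟨u, hu, a, ha, rfl⟩ k
      rw [hφ, GraphProduct.kill_of, if_pos ⟨u, hu, k, rfl⟩]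
      exact Subgroup.one_mem _
    have hallO := graphWreath_aux_top V H A Γ φ (GraphProduct.kill O) ⊥ S hSgen
      (fun x hx k =>
        graphWreath_aux_closure V H A Γ φ (GraphProduct.kill O) ⊥ Sgp hOprop
          x.left (hmemS x hx) k)
    have hO : ∀ w : V, w ∈ O := by
      intro w
      by_contra hw
      obtain ⟨a, ha⟩ := exists_ne (1 : A)
      have h1 := hallO (SemidirectProduct.inl (GraphProduct.of V A Γ w a)) 1
      rw [Subgroup.mem_bot] at h1
      simp only [SemidirectProduct.left_inl, map_one, MulAut.one_apply] at h1
      rw [GraphProduct.kill_of, if_neg hw] at h1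
      have h2 := congrArg (GraphProduct.retr (Γ := Γ) w) h1
      rw [GraphProduct.retr_of_self, map_one] at h2
      exact ha h2
    have hfin : Finite (MulAction.orbitRel.Quotient H V) := by
      have hsurj : Function.Surjective
          (fun u : U => (Quotient.mk'' u.1 : MulAction.orbitRel.Quotient H V)) := by
        intro q
        induction q using Quotient.inductionOn' with
        | h w =>
          obtain ⟨u, hu, k, hk⟩ := hO w
          refine ⟨⟨u, hu⟩, Quotient.sound' ?_⟩
          show u ∈ MulAction.orbit H w
          exact MulAction.mem_orbit_iff.mpr ⟨k⁻¹, by rw [← hk, inv_smul_smul]⟩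
      exact Finite.of_surjective _ hsurj
    exact ⟨hAfg, hHfg, hfin⟩
  · rintro ⟨hA, hH, horb⟩
    classical
    haveI := horb
    obtain ⟨SA, hSA, hSAfin⟩ := Group.fg_iff.mp hA
    obtain ⟨SH, hSH, hSHfin⟩ := Group.fg_iff.mp hH
    set X1 : Set (GraphProduct V A Γ ⋊[φ] H) :=
      (fun p : (MulAction.orbitRel.Quotient H V) × A =>
        SemidirectProduct.inl (GraphProduct.of V A Γ (Quotient.out p.1) p.2)) ''
        (Set.univ ×ˢ SA) with hX1
    set X2 : Set (GraphProduct V A Γ ⋊[φ] H) :=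
      (SemidirectProduct.inr (φ := φ)) '' SH with hX2
    have hX1fin : X1.Finite := (Set.finite_univ.prod hSAfin).image _
    have hX2fin : X2.Finite := hSHfin.image _
    refine Group.fg_iff.mpr ⟨X1 ∪ X2, ?_, hX1fin.union hX2fin⟩
    rw [eq_top_iff]
    intro x _
    have hinr : ∀ h : H,
        SemidirectProduct.inr (φ := φ) h ∈ Subgroup.closure (X1 ∪ X2) := by
      intro h
      have hle : Subgroup.closure SH ≤
          (Subgroup.closure (X1 ∪ X2)).comap (SemidirectProduct.inr (φ := φ)) := by
        rw [Subgroup.closure_le]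
        intro t ht
        exact Subgroup.subset_closure (Set.mem_union_right _ ⟨t, ht, rfl⟩)
      have hmem : h ∈ Subgroup.closure SH := by rw [hSH]; exact Subgroup.mem_top h
      exact hle hmem
    have hinl_of : ∀ (v : V) (a : A),
        SemidirectProduct.inl (φ := φ) (GraphProduct.of V A Γ v a) ∈
          Subgroup.closure (X1 ∪ X2) := by
      intro v
      have hrel : MulAction.orbitRel H V
          (Quotient.out (Quotient.mk'' (s₁ := MulAction.orbitRel H V) v)) v :=
        Quotient.exact' (Quotient.out_eq' _)
      obtain ⟨k0, hk0⟩ := MulAction.mem_orbit_iff.mp hrel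
      have hk : v = k0⁻¹ • Quotient.out (Quotient.mk'' (s₁ := MulAction.orbitRel H V) v) := by
        rw [← hk0, inv_smul_smul]
      have hSAmem : ∀ a ∈ SA,
          SemidirectProduct.inl (φ := φ) (GraphProduct.of V A Γ v a) ∈
            Subgroup.closure (X1 ∪ X2) := by
        intro a ha
        have h1 : SemidirectProduct.inl (φ := φ) (GraphProduct.of V A Γ
            (Quotient.out (Quotient.mk'' (s₁ := MulAction.orbitRel H V) v)) a) ∈ X1 :=
          ⟨(Quotient.mk'' v, a), ⟨Set.mem_univ _, ha⟩, rfl⟩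
        have h2 : SemidirectProduct.inl (φ := φ) (GraphProduct.of V A Γ v a) =
            SemidirectProduct.inr k0⁻¹ *
              SemidirectProduct.inl (GraphProduct.of V A Γ
                (Quotient.out (Quotient.mk'' (s₁ := MulAction.orbitRel H V) v)) a) *
              SemidirectProduct.inr (k0⁻¹)⁻¹ := by
          rw [← SemidirectProduct.inl_aut, hφ, ← hk]
        rw [h2]
        exact Subgroup.mul_mem _
          (Subgroup.mul_mem _ (hinr k0⁻¹)
            (Subgroup.subset_closure (Set.mem_union_left _ h1)))
          (hinr (k0⁻¹)⁻¹)
      intro a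
      have hle : Subgroup.closure SA ≤
          (Subgroup.closure (X1 ∪ X2)).comap
            ((SemidirectProduct.inl (φ := φ)).comp (GraphProduct.of V A Γ v)) := by
        rw [Subgroup.closure_le]
        intro b hb
        exact hSAmem b hb
      have hmem : a ∈ Subgroup.closure SA := by rw [hSA]; exact Subgroup.mem_top a
      exact hle hmem
    have hinl : ∀ g : GraphProduct V A Γ,
        SemidirectProduct.inl (φ := φ) g ∈ Subgroup.closure (X1 ∪ X2) := by
      intro g
      exact GraphProduct.mem_of_forall_of
        (K := (Subgroup.closure (X1 ∪ X2)).comap (SemidirectProduct.inl (φ := φ)))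
        (fun u a => hinl_of u a) g
    rw [← SemidirectProduct.inl_left_mul_inr_right x]
    exact Subgroup.mul_mem _ (hinl x.left) (hinr x.right)


end GraphWreath
end

section
/- For every n ≥ 1 and every finite subset S of R_n, the pointwise stabilizer {g ∈ H_n : g(s) = s for all s ∈ S} of S in the Houghton group H_n is isomorphic as a group to H_n. -/
/-- A permutation `g` of `R_n = {1,…,n} × ℕ` is an eventual translation if there are
integers `d 1, …, d n` such that, outside a finite set, `g (i, m) = (i, m + d i)`. -/
def IsEventualTranslation (n : ℕ) (g : Equiv.Perm (Fin n × ℕ)) : Prop :=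
  ∃ d : Fin n → ℤ,
    {x : Fin n × ℕ | ¬((g x).1 = x.1 ∧ ((g x).2 : ℤ) = (x.2 : ℤ) + d x.1)}.Finite

/-- The `n`-th Houghton group: the group of permutations of `R_n = {1,…,n} × ℕ` that
act as a translation far along each of the `n` rays. -/
def HoughtonGroup (n : ℕ) : Subgroup (Equiv.Perm (Fin n × ℕ)) where
  carrier := {g | IsEventualTranslation n g}
  one_mem' := ⟨0, by simp⟩
  mul_mem' := by
    rintro a b ⟨da, ha⟩ ⟨db, hb⟩
    refine ⟨fun i => db i + da i, Set.Finite.subset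
      (hb.union (ha.preimage (Function.Injective.injOn b.injective))) ?_⟩
    intro x hx
    by_contra hmem
    simp only [Set.mem_union, Set.mem_preimage, Set.mem_setOf_eq, not_or, not_not] at hmem
    obtain ⟨⟨hb1, hb2⟩, ⟨ha1, ha2⟩⟩ := hmem
    apply hx
    constructor
    · show (a (b x)).1 = x.1
      rw [ha1, hb1]
    · show ((a (b x)).2 : ℤ) = (x.2 : ℤ) + (db x.1 + da x.1)
      rw [ha2, hb1, hb2]
      ring
  inv_mem' := by
    rintro g ⟨d, hd⟩
    refine ⟨fun i => -d i, Set.Finite.subset (hd.image ⇑g) ?_⟩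
    intro x hx
    refine ⟨g⁻¹ x, fun hy => ?_, Equiv.apply_symm_apply g x⟩
    obtain ⟨h1, h2⟩ := hy
    rw [show g (g⁻¹ x) = x from Equiv.apply_symm_apply g x] at h1 h2
    refine hx ⟨h1.symm, ?_⟩
    rw [h1]
    beta_reduce
    omega

open scoped Classical

namespace HoughtonAux

variable {n : ℕ} (S : Set (Fin n × ℕ))

/-- the predicate "`(i, m)` is not in `S`". -/
def pp (i : Fin n) (m : ℕ) : Prop := (i, m) ∉ S

/-- A bound such that all second coordinates of elements of `S` are `< bd`. -/
noncomputable def bd (hS : S.Finite) : ℕ := hS.toFinset.sup Prod.snd + 1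

lemma lt_bd (hS : S.Finite) {x : Fin n × ℕ} (hx : x ∈ S) : x.2 < bd S hS := by
  have : x.2 ≤ hS.toFinset.sup Prod.snd :=
    Finset.le_sup (f := Prod.snd) (hS.mem_toFinset.mpr hx)
  simpa [bd] using Nat.lt_succ_of_le this

lemma pp_of_ge (hS : S.Finite) (i : Fin n) {m : ℕ} (hm : bd S hS ≤ m) : pp S i m := by
  intro h
  have := lt_bd S hS h
  simp at this
  omega

lemma pp_infinite (hS : S.Finite) (i : Fin n) : (setOf (pp S i)).Infinite :=
  (Set.Ici_infinite (bd S hS)).mono (fun m hm => pp_of_ge S hS i hm)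

/-- The number of elements of `S` on ray `i`, expressed via `Nat.count`. -/
noncomputable def ci (hS : S.Finite) (i : Fin n) : ℕ :=
  bd S hS - Nat.count (pp S i) (bd S hS)

lemma count_add_ci (hS : S.Finite) (i : Fin n) :
    ∀ k, bd S hS ≤ k → Nat.count (pp S i) k + ci S hS i = k := by
  intro k hk
  induction k, hk using Nat.le_induction with
  | base =>
    have h1 : Nat.count (pp S i) (bd S hS) ≤ bd S hS := Nat.count_le _
    simp only [ci]
    omega
  | succ k hk ih =>
    rw [Nat.count_succ, if_pos (pp_of_ge S hS i hk)]
    omega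

lemma nth_eq (hS : S.Finite) (i : Fin n) {m : ℕ} (hm : bd S hS ≤ m) :
    Nat.nth (pp S i) m = m + ci S hS i := by
  have h1 : bd S hS ≤ m + ci S hS i := hm.trans (Nat.le_add_right _ _)
  have h2 := count_add_ci S hS i (m + ci S hS i) h1
  have h3 : Nat.count (pp S i) (m + ci S hS i) = m := by omega
  have h4 := Nat.nth_count (p := pp S i) (pp_of_ge S hS i h1)
  rw [h3] at h4
  exact h4

/-- The "shift into the complement of `S`" injection. -/
noncomputable def Ef (x : Fin n × ℕ) : Fin n × ℕ := (x.1, Nat.nth (pp S x.1) x.2)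

/-- The retraction of `Ef`. -/
noncomputable def rf (x : Fin n × ℕ) : Fin n × ℕ := (x.1, Nat.count (pp S x.1) x.2)

lemma Ef_not_mem (hS : S.Finite) (x : Fin n × ℕ) : Ef S x ∉ S :=
  Nat.nth_mem_of_infinite (pp_infinite S hS x.1) x.2

lemma rf_Ef (hS : S.Finite) (x : Fin n × ℕ) : rf S (Ef S x) = x := by
  cases x with
  | mk i m =>
    simp only [rf, Ef]
    exact Prod.ext rfl (Nat.count_nth_of_infinite (pp_infinite S hS i) m)

lemma Ef_rf (x : Fin n × ℕ) (hx : x ∉ S) : Ef S (rf S x) = x := by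
  cases x with
  | mk i m =>
    simp only [rf, Ef]
    exact Prod.ext rfl (Nat.nth_count (p := pp S i) hx)

lemma Ef_eq (hS : S.Finite) (i : Fin n) {m : ℕ} (hm : bd S hS ≤ m) :
    Ef S (i, m) = (i, m + ci S hS i) := by
  simp only [Ef]
  exact Prod.ext rfl (nth_eq S hS i hm)

section Perms

variable (g : Equiv.Perm (Fin n × ℕ))

lemma fix_inv (hg : ∀ x ∈ S, g x = x) : ∀ x ∈ S, g⁻¹ x = x := by
  intro x hx
  conv_lhs => rw [← hg x hx]
  exact g.symm_apply_apply x

lemma not_mem_apply (hg : ∀ x ∈ S, g x = x) {x : Fin n × ℕ} (hx : x ∉ S) : g x ∉ S := by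
  intro h
  exact hx (by rw [← g.injective (hg (g x) h)]; exact h)

/-- The underlying map of the conjugated permutation. -/
noncomputable def PhiP : (Fin n × ℕ) → (Fin n × ℕ) := fun x => rf S (g (Ef S x))

/-- The conjugated permutation: conjugate `g` by `Ef`. -/
noncomputable def PhiE (hS : S.Finite) (hg : ∀ x ∈ S, g x = x) : Equiv.Perm (Fin n × ℕ) where
  toFun := PhiP S g
  invFun := PhiP S g⁻¹
  left_inv := by
    intro x
    simp only [PhiP]
    rw [Ef_rf S _ (not_mem_apply S g hg (Ef_not_mem S hS x)), show ∀ y, g⁻¹ (g y) = y from Equiv.symm_apply_apply g,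
      rf_Ef S hS]
  right_inv := by
    intro x
    simp only [PhiP]
    rw [Ef_rf S _ (not_mem_apply S g⁻¹ (fix_inv S g hg) (Ef_not_mem S hS x)),
      show ∀ y, g (g⁻¹ y) = y from Equiv.apply_symm_apply g, rf_Ef S hS]

/-- The underlying map of the extension of a permutation to `S` by the identity. -/
noncomputable def PsiP : (Fin n × ℕ) → (Fin n × ℕ) :=
  fun x => if x ∈ S then x else Ef S (g (rf S x))

/-- The extension permutation. -/
noncomputable def PsiE (hS : S.Finite) : Equiv.Perm (Fin n × ℕ) where
  toFun := PsiP S g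
  invFun := PsiP S g⁻¹
  left_inv := by
    intro x
    simp only [PsiP]
    by_cases hx : x ∈ S
    · simp [hx]
    · simp only [if_neg hx]
      rw [if_neg (Ef_not_mem S hS _), rf_Ef S hS, show ∀ y, g⁻¹ (g y) = y from Equiv.symm_apply_apply g,
        Ef_rf S x hx]
  right_inv := by
    intro x
    simp only [PsiP]
    by_cases hx : x ∈ S
    · simp [hx]
    · simp only [if_neg hx]
      rw [if_neg (Ef_not_mem S hS _), rf_Ef S hS, show ∀ y, g (g⁻¹ y) = y from Equiv.apply_symm_apply g,
        Ef_rf S x hx]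

lemma PhiE_apply (hS : S.Finite) (hg : ∀ x ∈ S, g x = x) (x : Fin n × ℕ) :
    PhiE S g hS hg x = rf S (g (Ef S x)) := rfl

lemma PsiE_apply (hS : S.Finite) (x : Fin n × ℕ) :
    PsiE S g hS x = if x ∈ S then x else Ef S (g (rf S x)) := rfl

lemma PsiE_fix (hS : S.Finite) : ∀ x ∈ S, PsiE S g hS x = x := by
  intro x hx
  rw [PsiE_apply, if_pos hx]

lemma Phi_Psi (hS : S.Finite) (hfix : ∀ x ∈ S, PsiE S g hS x = x) :
    PhiE S (PsiE S g hS) hS hfix = g := by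
  refine Equiv.ext fun x => ?_
  rw [PhiE_apply, PsiE_apply, if_neg (Ef_not_mem S hS x), rf_Ef S hS, rf_Ef S hS]

lemma Psi_Phi (hS : S.Finite) (hg : ∀ x ∈ S, g x = x) :
    PsiE S (PhiE S g hS hg) hS = g := by
  refine Equiv.ext fun x => ?_
  rw [PsiE_apply]
  by_cases hx : x ∈ S
  · rw [if_pos hx, hg x hx]
  · rw [if_neg hx, PhiE_apply, Ef_rf S x hx,
      Ef_rf S _ (not_mem_apply S g hg hx)]

lemma Phi_mul (hS : S.Finite) (g₁ g₂ : Equiv.Perm (Fin n × ℕ))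
    (h₁ : ∀ x ∈ S, g₁ x = x) (h₂ : ∀ x ∈ S, g₂ x = x) (h₁₂ : ∀ x ∈ S, (g₁ * g₂) x = x) :
    PhiE S (g₁ * g₂) hS h₁₂ = PhiE S g₁ hS h₁ * PhiE S g₂ hS h₂ := by
  refine Equiv.ext fun x => ?_
  rw [Equiv.Perm.mul_apply, PhiE_apply, PhiE_apply, PhiE_apply, Equiv.Perm.mul_apply,
    Ef_rf S _ (not_mem_apply S g₂ h₂ (Ef_not_mem S hS x))]

end Perms

lemma box_finite (M : ℕ) : {x : Fin n × ℕ | x.2 < M}.Finite :=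
  ((Set.finite_univ (α := Fin n)).prod (Set.finite_Iio M)).subset
    (fun x hx => ⟨Set.mem_univ _, hx⟩)

lemma PhiE_mem (hS : S.Finite) (g : Equiv.Perm (Fin n × ℕ)) (hg : ∀ x ∈ S, g x = x)
    (hgH : IsEventualTranslation n g) : IsEventualTranslation n (PhiE S g hS hg) := by
  obtain ⟨d, hd⟩ := hgH
  set N := bd S hS with hN
  set M₁ := hd.toFinset.sup Prod.snd + 1 with hM₁
  set D := Finset.univ.sup (fun i => (d i).natAbs) with hD
  set C := Finset.univ.sup (ci S hS) with hC
  refine ⟨d, (box_finite (N + M₁ + D + C)).subset ?_⟩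
  intro x hx
  simp only [Set.mem_setOf_eq] at hx ⊢
  by_contra hM
  push_neg at hM
  apply hx
  obtain ⟨i, m⟩ := x
  simp only at hM
  have hDi : (d i).natAbs ≤ D := by
    rw [hD]; exact Finset.le_sup (f := fun i => (d i).natAbs) (Finset.mem_univ i)
  have hCi : ci S hS i ≤ C := by
    rw [hC]; exact Finset.le_sup (f := ci S hS) (Finset.mem_univ i)
  have hm1 : N ≤ m := by omega
  have hEf : Ef S (i, m) = (i, m + ci S hS i) := Ef_eq S hS i hm1
  have hy : (i, m + ci S hS i) ∉ {x : Fin n × ℕ |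
      ¬((g x).1 = x.1 ∧ ((g x).2 : ℤ) = (x.2 : ℤ) + d x.1)} := by
    intro hy
    have := Finset.le_sup (f := Prod.snd) (hd.mem_toFinset.mpr hy)
    simp only at this
    omega
  simp only [Set.mem_setOf_eq, not_not] at hy
  obtain ⟨hy1, hy2⟩ := hy
  set k := (g (i, m + ci S hS i)).2 with hk
  have hk2 : (k : ℤ) = (m : ℤ) + ci S hS i + d i := by
    rw [hk]; rw [hy2]; push_cast; ring
  have hkN : N ≤ k := by omega
  have happ : PhiE S g hS hg (i, m) = (i, Nat.count (pp S i) k) := by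
    rw [PhiE_apply, hEf, rf]
    exact Prod.ext hy1 (by rw [hy1])
  have hcount := count_add_ci S hS i k hkN
  rw [happ]
  exact ⟨rfl, by simp only; omega⟩

lemma PsiE_mem (hS : S.Finite) (g : Equiv.Perm (Fin n × ℕ))
    (hgH : IsEventualTranslation n g) : IsEventualTranslation n (PsiE S g hS) := by
  obtain ⟨d, hd⟩ := hgH
  set N := bd S hS with hN
  set M₁ := hd.toFinset.sup Prod.snd + 1 with hM₁
  set D := Finset.univ.sup (fun i => (d i).natAbs) with hD
  set C := Finset.univ.sup (ci S hS) with hC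
  refine ⟨d, (box_finite (N + M₁ + D + C)).subset ?_⟩
  intro x hx
  simp only [Set.mem_setOf_eq] at hx ⊢
  by_contra hM
  push_neg at hM
  apply hx
  obtain ⟨i, m⟩ := x
  simp only at hM
  have hDi : (d i).natAbs ≤ D := by
    rw [hD]; exact Finset.le_sup (f := fun i => (d i).natAbs) (Finset.mem_univ i)
  have hCi : ci S hS i ≤ C := by
    rw [hC]; exact Finset.le_sup (f := ci S hS) (Finset.mem_univ i)
  have hm1 : N ≤ m := by omega
  have hmS : (i, m) ∉ S := pp_of_ge S hS i hm1
  set q := Nat.count (pp S i) m with hq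
  have hcq : q + ci S hS i = m := count_add_ci S hS i m hm1
  have hrf : rf S (i, m) = (i, q) := rfl
  have hy : (i, q) ∉ {x : Fin n × ℕ |
      ¬((g x).1 = x.1 ∧ ((g x).2 : ℤ) = (x.2 : ℤ) + d x.1)} := by
    intro hy
    have := Finset.le_sup (f := Prod.snd) (hd.mem_toFinset.mpr hy)
    simp only at this
    omega
  simp only [Set.mem_setOf_eq, not_not] at hy
  obtain ⟨hy1, hy2⟩ := hy
  set k := (g (i, q)).2 with hk
  have hk2 : (k : ℤ) = (q : ℤ) + d i := hy2
  have hkN : N ≤ k := by omega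
  have hgq : g (i, q) = (i, k) := Prod.ext hy1 rfl
  have happ : PsiE S g hS (i, m) = (i, k + ci S hS i) := by
    rw [PsiE_apply, if_neg hmS, hrf, hgq, Ef_eq S hS i hkN]
  rw [happ]
  exact ⟨rfl, by simp only; omega⟩

lemma mem_stab_iff (hS : S.Finite) (g : Equiv.Perm (Fin n × ℕ)) :
    g ∈ (HoughtonGroup n ⊓ ⨅ x ∈ S, MulAction.stabilizer (Equiv.Perm (Fin n × ℕ)) x) ↔
      IsEventualTranslation n g ∧ ∀ x ∈ S, g x = x := by
  rw [Subgroup.mem_inf]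
  refine and_congr Iff.rfl ?_
  simp only [Subgroup.mem_iInf, MulAction.mem_stabilizer_iff, Equiv.Perm.smul_def]

end HoughtonAux

/-- The pointwise stabilizer in the Houghton group `H_n` of a finite subset of
`R_n = {1,…,n} × ℕ` is isomorphic to `H_n` itself. -/
theorem houghtonGroup_pointwise_stabilizer_iso (n : ℕ) (hn : 1 ≤ n)
    (S : Set (Fin n × ℕ)) (hS : S.Finite) :
    Nonempty
      ((HoughtonGroup n ⊓ ⨅ x ∈ S, MulAction.stabilizer (Equiv.Perm (Fin n × ℕ)) x :
        Subgroup (Equiv.Perm (Fin n × ℕ))) ≃* HoughtonGroup n) := by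
  constructor
  have fix : ∀ g : (HoughtonGroup n ⊓ ⨅ x ∈ S,
      MulAction.stabilizer (Equiv.Perm (Fin n × ℕ)) x : Subgroup (Equiv.Perm (Fin n × ℕ))),
      ∀ x ∈ S, g.1 x = x :=
    fun g => ((HoughtonAux.mem_stab_iff S hS g.1).mp g.2).2
  have het : ∀ g : (HoughtonGroup n ⊓ ⨅ x ∈ S,
      MulAction.stabilizer (Equiv.Perm (Fin n × ℕ)) x : Subgroup (Equiv.Perm (Fin n × ℕ))),
      IsEventualTranslation n g.1 :=
    fun g => ((HoughtonAux.mem_stab_iff S hS g.1).mp g.2).1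
  exact
    { toFun := fun g =>
        ⟨HoughtonAux.PhiE S g.1 hS (fix g), HoughtonAux.PhiE_mem S hS g.1 (fix g) (het g)⟩
      invFun := fun h =>
        ⟨HoughtonAux.PsiE S h.1 hS,
          (HoughtonAux.mem_stab_iff S hS _).mpr
            ⟨HoughtonAux.PsiE_mem S hS h.1 h.2, HoughtonAux.PsiE_fix S h.1 hS⟩⟩
      left_inv := fun g => Subtype.ext (HoughtonAux.Psi_Phi S g.1 hS (fix g))
      right_inv := fun h => Subtype.ext (HoughtonAux.Phi_Psi S h.1 hS (HoughtonAux.PsiE_fix S h.1 hS))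
      map_mul' := fun g₁ g₂ =>
        Subtype.ext
          (HoughtonAux.Phi_mul S hS g₁.1 g₂.1 (fix g₁) (fix g₂) (fix (g₁ * g₂))) }
end
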